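/- The weighted totient sum satisfies \(\sum_{j=1}^n j^2\cdot\phi(j) = \frac{3n^4}{2\pi^2} + O(n^3 \log n)\). -/

import Mathlib

open Finset ArithmeticFunction Real
open scoped ArithmeticFunction.Moebius ArithmeticFunction.zeta


-- φ via Möbius inversion
lemma totient_moebius (n : ℕ) (hn : 0 < n) :
    ((n.totient : ℝ)) = ∑ x ∈ n.divisorsAntidiagonal, (μ x.1 : ℝ) * x.2 := by
  have h := (sum_eq_iff_sum_smul_moebius_eq (R := ℝ)
    (f := fun i => (i.totient : ℝ)) (g := fun i => (i : ℝ))).mp ?_ n hn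
  · rw [← h]
    refine Finset.sum_congr rfl fun x hx => ?_
    simp [zsmul_eq_mul]
  · intro m hm
    rw [← Nat.cast_sum]
    norm_cast
    exact Nat.sum_totient m


lemma swap_divisor_sum (F : ℕ × ℕ → ℝ) (n : ℕ) :
    ∑ j ∈ Icc 1 n, ∑ x ∈ j.divisorsAntidiagonal, F x
      = ∑ d ∈ Icc 1 n, ∑ m ∈ Icc 1 (n / d), F (d, m) := by
  set P : Finset (ℕ × ℕ) := (Icc 1 n ×ˢ Icc 1 n).filter (fun p => p.1 * p.2 ≤ n) with hP
  have memP : ∀ p : ℕ × ℕ, p ∈ P ↔ 1 ≤ p.1 ∧ 1 ≤ p.2 ∧ p.1 * p.2 ≤ n := by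
    intro p
    simp only [hP, mem_filter, mem_product, mem_Icc]
    constructor
    · rintro ⟨⟨⟨h1, _⟩, ⟨h2, _⟩⟩, h3⟩; exact ⟨h1, h2, h3⟩
    · rintro ⟨h1, h2, h3⟩
      refine ⟨⟨⟨h1, ?_⟩, ⟨h2, ?_⟩⟩, h3⟩
      · calc p.1 = p.1 * 1 := by ring
          _ ≤ p.1 * p.2 := Nat.mul_le_mul_left _ h2
          _ ≤ n := h3
      · calc p.2 = 1 * p.2 := by ring
          _ ≤ p.1 * p.2 := Nat.mul_le_mul_right _ h1
          _ ≤ n := h3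
  have h1 : ∑ j ∈ Icc 1 n, ∑ x ∈ j.divisorsAntidiagonal, F x = ∑ p ∈ P, F p := by
    rw [← Finset.sum_fiberwise_of_maps_to (g := fun p : ℕ × ℕ => p.1 * p.2) (t := Icc 1 n) ?_ F]
    · refine Finset.sum_congr rfl fun j hj => ?_
      rw [mem_Icc] at hj
      refine Finset.sum_congr ?_ fun _ _ => rfl
      ext p
      simp only [mem_filter, memP, Nat.mem_divisorsAntidiagonal]
      constructor
      · rintro ⟨hj0, hne⟩
        have hp1 : p.1 ≠ 0 := by
          rintro h0; rw [h0] at hj0; simp at hj0; omega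
        have hp2 : p.2 ≠ 0 := by
          rintro h0; rw [h0] at hj0; simp at hj0; omega
        have hle : p.1 * p.2 ≤ n := by omega
        exact ⟨⟨by omega, by omega, hle⟩, hj0⟩
      · rintro ⟨⟨_, _, _⟩, h⟩; exact ⟨h, by omega⟩
    · intro p hp
      rw [memP] at hp
      rw [mem_Icc]
      exact ⟨by nlinarith [hp.1, hp.2.1], hp.2.2⟩
  have h2 : ∑ p ∈ P, F p = ∑ d ∈ Icc 1 n, ∑ m ∈ Icc 1 (n / d), F (d, m) := by
    rw [← Finset.sum_fiberwise_of_maps_to (g := fun p : ℕ × ℕ => p.1) (t := Icc 1 n) ?_ F]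
    · refine Finset.sum_congr rfl fun d hd => ?_
      rw [mem_Icc] at hd
      refine Finset.sum_nbij' (fun p => p.2) (fun m => (d, m)) ?_ ?_ ?_ ?_ ?_
      · intro p hp
        simp only [mem_filter, memP] at hp
        obtain ⟨⟨_, h2', h3⟩, h4⟩ := hp
        rw [mem_Icc]
        rw [← h4]
        refine ⟨h2', (Nat.le_div_iff_mul_le (by omega)).mpr ?_⟩
        rw [mul_comm]; exact h3
      · intro m hm
        rw [mem_Icc] at hm
        simp only [mem_filter, memP]
        have hmd : m * d ≤ n := (Nat.le_div_iff_mul_le (by omega : 0 < d)).mp hm.2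
        exact ⟨⟨hd.1, hm.1, by rw [mul_comm]; exact hmd⟩, trivial⟩
      · intro p hp
        simp only [mem_filter] at hp
        rw [← hp.2]
      · intro m _; rfl
      · intro p hp
        simp only [mem_filter] at hp
        rw [← hp.2]
    · intro p hp
      rw [memP] at hp
      rw [mem_Icc]
      exact ⟨hp.1, by nlinarith [hp.1, hp.2.1, hp.2.2]⟩
  rw [h1, h2]


lemma summable_moebius_div_sq : Summable (fun d : ℕ => (μ d : ℝ) / d ^ 2) := by
  have hs : Summable (fun d : ℕ => ((d : ℝ) ^ 2)⁻¹) := by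
    simpa using Real.summable_one_div_nat_pow.mpr one_lt_two
  refine Summable.of_abs (hs.of_nonneg_of_le (fun d => abs_nonneg _) ?_)
  intro d
  rcases eq_or_ne d 0 with rfl | hd
  · simp
  · rw [abs_div, abs_pow, Nat.abs_cast]
    rw [div_le_iff₀ (by positivity)]
    rw [inv_mul_cancel₀ (by positivity)]
    have : |(μ d : ℤ)| ≤ 1 := abs_moebius_le_one
    calc |((μ d : ℤ) : ℝ)| = ((|(μ d : ℤ)| : ℤ) : ℝ) := by push_cast; simp
      _ ≤ 1 := by exact_mod_cast this

lemma moebius_tsum : ∑' d : ℕ, (μ d : ℝ) / d ^ 2 = 6 / π ^ 2 := by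
  have h2 : (1 : ℝ) < (2 : ℂ).re := by norm_num
  have hmul := LSeries_zeta_mul_Lseries_moebius (s := 2) h2
  have hζ : LSeries (fun n => ((ζ n : ℕ) : ℂ)) 2 = riemannZeta 2 := LSeries_zeta_eq_riemannZeta h2
  have hz2 : riemannZeta 2 = (Real.pi : ℂ) ^ 2 / 6 := riemannZeta_two
  have hne : (Real.pi : ℂ) ^ 2 / 6 ≠ 0 := by
    simp [Real.pi_ne_zero]
  have hL : LSeries (fun n => ((μ n : ℤ) : ℂ)) 2 = 6 / (Real.pi : ℂ) ^ 2 := by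
    rw [hζ, hz2] at hmul
    have hπ : (Real.pi : ℂ) ^ 2 ≠ 0 := by
      simp [Real.pi_ne_zero]
    rw [eq_div_iff hπ]
    field_simp at hmul
    linear_combination hmul
  have hterm : ∀ n : ℕ, LSeries.term (fun n => ((μ n : ℤ) : ℂ)) 2 n
      = (((μ n : ℝ) / n ^ 2 : ℝ) : ℂ) := by
    intro n
    rcases eq_or_ne n 0 with rfl | hn
    · simp [LSeries.term]
    · rw [LSeries.term_of_ne_zero hn]
      rw [show ((2 : ℂ)) = ((2 : ℕ) : ℂ) by norm_num, Complex.cpow_natCast]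
      push_cast
      ring
  have : ((∑' d : ℕ, (μ d : ℝ) / d ^ 2 : ℝ) : ℂ) = 6 / (Real.pi : ℂ) ^ 2 := by
    rw [Complex.ofReal_tsum]
    rw [← hL]
    exact tsum_congr fun n => (hterm n).symm
  have h6 : ((6 / π ^ 2 : ℝ) : ℂ) = 6 / (Real.pi : ℂ) ^ 2 := by push_cast; ring
  exact Complex.ofReal_injective (by rw [this, h6])



lemma tail_tsum_le (n : ℕ) (hn : 1 ≤ n) :
    ∑' i : ℕ, (((i + (n + 1) : ℕ) : ℝ) ^ 2)⁻¹ ≤ (n : ℝ)⁻¹ := by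
  have hsum : Summable (fun i : ℕ => (((i + (n + 1) : ℕ) : ℝ) ^ 2)⁻¹) := by
    have hs : Summable (fun d : ℕ => ((d : ℝ) ^ 2)⁻¹) := by
      simpa using Real.summable_one_div_nat_pow.mpr one_lt_two
    exact (summable_nat_add_iff (n + 1)).mpr hs |>.congr (fun i => by push_cast; ring_nf)
  refine Summable.tsum_le_of_sum_le hsum fun s => ?_
  set N := n + 1 + s.sup _root_.id with hN
  calc ∑ i ∈ s, (((i + (n + 1) : ℕ) : ℝ) ^ 2)⁻¹
      = ∑ j ∈ s.map ⟨fun i => i + (n + 1), fun a b h => by simpa using h⟩, ((j : ℝ) ^ 2)⁻¹ := by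
        rw [Finset.sum_map]; rfl
    _ ≤ ∑ j ∈ Ioc n N, ((j : ℝ) ^ 2)⁻¹ := by
        refine Finset.sum_le_sum_of_subset_of_nonneg ?_ (fun j _ _ => by positivity)
        intro j hj
        simp only [Finset.mem_map, Function.Embedding.coeFn_mk] at hj
        obtain ⟨i, hi, rfl⟩ := hj
        have : i ≤ s.sup _root_.id := Finset.le_sup (f := _root_.id) hi
        rw [mem_Ioc]
        show n < i + (n + 1) ∧ i + (n + 1) ≤ N
        omega
    _ ≤ (n : ℝ)⁻¹ - (N : ℝ)⁻¹ := sum_Ioc_inv_sq_le_sub (by omega) (by omega)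
    _ ≤ (n : ℝ)⁻¹ := by
        have : (0:ℝ) ≤ (N : ℝ)⁻¹ := by positivity
        linarith

lemma moebius_partial (n : ℕ) (hn : 1 ≤ n) :
    |∑ d ∈ Icc 1 n, (μ d : ℝ) / d ^ 2 - 6 / π ^ 2| ≤ (n : ℝ)⁻¹ := by
  set f : ℕ → ℝ := fun d => (μ d : ℝ) / d ^ 2 with hf
  have hIcc : ∑ d ∈ Finset.range (n + 1), f d = ∑ d ∈ Icc 1 n, f d := by
    refine (Finset.sum_subset ?_ ?_).symm
    · intro x hx; rw [mem_Icc] at hx; rw [Finset.mem_range]; omega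
    · intro x hx hnx
      rw [Finset.mem_range] at hx
      rw [mem_Icc] at hnx
      have : x = 0 := by omega
      subst this
      simp [hf]
  have hsum := summable_moebius_div_sq
  have hadd := Summable.sum_add_tsum_nat_add (n + 1) hsum
  rw [moebius_tsum] at hadd
  have : ∑ d ∈ Icc 1 n, f d - 6 / π ^ 2 = -(∑' i : ℕ, f (i + (n + 1))) := by
    rw [← hIcc]; linarith [hadd]
  rw [this, abs_neg]
  have habs : |∑' i : ℕ, f (i + (n + 1))| ≤ ∑' i : ℕ, (((i + (n + 1) : ℕ) : ℝ) ^ 2)⁻¹ := by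
    have h1 : |∑' i : ℕ, f (i + (n + 1))| ≤ ∑' i : ℕ, |f (i + (n + 1))| := by
      have := norm_tsum_le_tsum_norm (f := fun i : ℕ => f (i + (n + 1))) ?_
      · simpa using this
      · exact ((summable_nat_add_iff (n+1)).mpr hsum).abs.congr (fun i => (Real.norm_eq_abs _).symm)
    refine h1.trans (Summable.tsum_le_tsum ?_ ?_ ?_)
    · intro i
      have hd : (i + (n+1) : ℕ) ≠ 0 := by omega
      rw [hf, abs_div, abs_pow, Nat.abs_cast]
      rw [div_le_iff₀ (by positivity)]
      rw [inv_mul_cancel₀ (by positivity)]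
      have : |(μ (i + (n+1)) : ℤ)| ≤ 1 := abs_moebius_le_one
      calc |((μ (i + (n+1)) : ℤ) : ℝ)| = ((|(μ (i + (n+1)) : ℤ)| : ℤ) : ℝ) := by push_cast; simp
        _ ≤ 1 := by exact_mod_cast this
    · exact ((summable_nat_add_iff (n+1)).mpr hsum).abs
    · have hs : Summable (fun d : ℕ => ((d : ℝ) ^ 2)⁻¹) := by
        simpa using Real.summable_one_div_nat_pow.mpr one_lt_two
      exact (summable_nat_add_iff (n + 1)).mpr hs |>.congr (fun i => by push_cast; ring_nf)
  exact habs.trans (tail_tsum_le n hn)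


lemma cube_sum (k : ℕ) : ∑ m ∈ Icc 1 k, (m : ℝ) ^ 3 = (k : ℝ) ^ 2 * ((k : ℝ) + 1) ^ 2 / 4 := by
  induction k with
  | zero => simp
  | succ k ih =>
    rw [Finset.sum_Icc_succ_top (by omega), ih]
    push_cast
    ring

lemma cube_sum_err (k : ℕ) : |∑ m ∈ Icc 1 k, (m : ℝ) ^ 3 - (k : ℝ) ^ 4 / 4| ≤ (k : ℝ) ^ 3 := by
  rw [cube_sum]
  have hk : (0 : ℝ) ≤ (k : ℝ) := Nat.cast_nonneg k
  rcases Nat.eq_zero_or_pos k with rfl | hk1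
  · norm_num
  have hk1' : (1 : ℝ) ≤ (k : ℝ) := by exact_mod_cast hk1
  rw [abs_le]
  constructor <;> nlinarith [sq_nonneg ((k:ℝ)), mul_nonneg hk hk, mul_le_mul_of_nonneg_left hk1' (mul_nonneg hk hk)]

lemma harmonic_bound (n : ℕ) : ∑ d ∈ Icc 1 n, ((d : ℝ))⁻¹ ≤ 1 + Real.log n := by
  have h := harmonic_le_one_add_log n
  rw [harmonic_eq_sum_Icc] at h
  calc ∑ d ∈ Icc 1 n, ((d : ℝ))⁻¹ = ((∑ d ∈ Icc 1 n, ((d : ℚ))⁻¹ : ℚ) : ℝ) := by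
        push_cast; rfl
    _ ≤ 1 + Real.log n := by exact_mod_cast h

-- floor ratio facts
lemma floor_div_le (n d : ℕ) (hd : 0 < d) : ((n / d : ℕ) : ℝ) ≤ (n : ℝ) / d :=
  Nat.cast_div_le

lemma div_lt_floor_add_one (n d : ℕ) (hd : 0 < d) : (n : ℝ) / d < ((n / d : ℕ) : ℝ) + 1 := by
  rw [div_lt_iff₀ (by positivity)]
  have h := Nat.lt_div_mul_add (a := n) hd
  calc (n : ℝ) < ((n / d * d + d : ℕ) : ℝ) := by exact_mod_cast h
    _ = (((n / d : ℕ) : ℝ) + 1) * d := by push_cast; ring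

lemma pow4_err (n d : ℕ) (hd : 0 < d) :
    |((n / d : ℕ) : ℝ) ^ 4 / 4 - ((n : ℝ) / d) ^ 4 / 4| ≤ ((n : ℝ) / d) ^ 3 := by
  set a := ((n / d : ℕ) : ℝ) with ha
  set x := (n : ℝ) / d with hx
  have h0 : 0 ≤ a := Nat.cast_nonneg _
  have h1 : a ≤ x := floor_div_le n d hd
  have h2 : x ≤ a + 1 := (div_lt_floor_add_one n d hd).le
  rw [abs_le]
  have hx0 : 0 ≤ x := h0.trans h1
  have key : x ^ 4 - a ^ 4 ≤ 4 * x ^ 3 := by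
    have factored : x ^ 4 - a ^ 4 = (x - a) * (x ^ 3 + x ^ 2 * a + x * a ^ 2 + a ^ 3) := by ring
    rw [factored]
    have hb : x ^ 3 + x ^ 2 * a + x * a ^ 2 + a ^ 3 ≤ 4 * x ^ 3 := by
      nlinarith [pow_le_pow_left₀ h0 h1 3, mul_le_mul_of_nonneg_left (mul_le_mul h1 h1 h0 hx0) hx0, mul_le_mul_of_nonneg_right (mul_le_mul h1 h1 h0 hx0) h0]
    have hxa : 0 ≤ x - a := by linarith
    have hnn : 0 ≤ x ^ 3 + x ^ 2 * a + x * a ^ 2 + a ^ 3 := by positivity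
    calc (x - a) * (x ^ 3 + x ^ 2 * a + x * a ^ 2 + a ^ 3) ≤ 1 * (4 * x ^ 3) := by
          apply mul_le_mul (by linarith) hb hnn (by norm_num)
      _ = 4 * x ^ 3 := by ring
  have key2 : a ^ 4 ≤ x ^ 4 := pow_le_pow_left₀ h0 h1 4
  constructor <;> nlinarith [pow_nonneg hx0 3]

lemma abs_moebius_real (d : ℕ) : |(μ d : ℝ)| ≤ 1 := by
  have : |(μ d : ℤ)| ≤ 1 := abs_moebius_le_one
  calc |((μ d : ℤ) : ℝ)| = ((|(μ d : ℤ)| : ℤ) : ℝ) := by push_cast; simp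
    _ ≤ 1 := by exact_mod_cast this

theorem sq_weighted_totient_sum_asymptotic :
    ∃ C : ℝ, 0 < C ∧ ∀ n : ℕ, 2 ≤ n →
      |(∑ j ∈ Finset.Icc 1 n, (j : ℝ) ^ 2 * (Nat.totient j : ℝ)) - 3 * (n : ℝ) ^ 4 / (2 * Real.pi ^ 2)|
        ≤ C * (n : ℝ) ^ 3 * Real.log n := by
  refine ⟨10, by norm_num, fun n hn => ?_⟩
  have hn0 : 0 < n := by omega
  have hnR : (2 : ℝ) ≤ (n : ℝ) := by exact_mod_cast hn
  -- Step A
  have hA : ∑ j ∈ Icc 1 n, (j : ℝ) ^ 2 * (Nat.totient j : ℝ)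
      = ∑ d ∈ Icc 1 n, (μ d : ℝ) * (d : ℝ) ^ 2 * ∑ m ∈ Icc 1 (n / d), (m : ℝ) ^ 3 := by
    have h1 : ∀ j ∈ Icc 1 n, (j : ℝ) ^ 2 * (Nat.totient j : ℝ)
        = ∑ x ∈ j.divisorsAntidiagonal, ((μ x.1 : ℝ) * (x.1 : ℝ) ^ 2 * (x.2 : ℝ) ^ 3) := by
      intro j hj
      rw [mem_Icc] at hj
      rw [totient_moebius j (by omega), Finset.mul_sum]
      refine Finset.sum_congr rfl fun x hx => ?_
      obtain ⟨hxj, -⟩ := Nat.mem_divisorsAntidiagonal.mp hx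
      rw [← hxj]
      push_cast
      ring
    rw [Finset.sum_congr rfl h1,
      swap_divisor_sum (fun x => (μ x.1 : ℝ) * (x.1 : ℝ) ^ 2 * (x.2 : ℝ) ^ 3) n]
    refine Finset.sum_congr rfl fun d _ => ?_
    rw [Finset.mul_sum]
  set B := ∑ d ∈ Icc 1 n, (μ d : ℝ) * (d : ℝ) ^ 2 * (((n / d : ℕ) : ℝ) ^ 4 / 4) with hB
  set Cs := ∑ d ∈ Icc 1 n, (μ d : ℝ) * (d : ℝ) ^ 2 * (((n : ℝ) / d) ^ 4 / 4) with hCs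
  set D := 3 * (n : ℝ) ^ 4 / (2 * Real.pi ^ 2) with hD
  have hdpos : ∀ d ∈ Icc 1 n, (0 : ℝ) < (d : ℝ) := by
    intro d hd; rw [mem_Icc] at hd
    exact_mod_cast Nat.lt_of_lt_of_le Nat.zero_lt_one hd.1
  -- |T - B|
  have hTB : |(∑ j ∈ Icc 1 n, (j : ℝ) ^ 2 * (Nat.totient j : ℝ)) - B|
      ≤ (n : ℝ) ^ 3 * (1 + Real.log n) := by
    rw [hA, hB, ← Finset.sum_sub_distrib]
    calc |∑ d ∈ Icc 1 n, ((μ d : ℝ) * (d : ℝ) ^ 2 * ∑ m ∈ Icc 1 (n / d), (m : ℝ) ^ 3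
          - (μ d : ℝ) * (d : ℝ) ^ 2 * (((n / d : ℕ) : ℝ) ^ 4 / 4))|
        ≤ ∑ d ∈ Icc 1 n, (n : ℝ) ^ 3 * ((d : ℝ))⁻¹ := by
          refine (Finset.abs_sum_le_sum_abs _ _).trans (Finset.sum_le_sum fun d hd => ?_)
          have hdp := hdpos d hd
          have hdn : 0 < d := by exact_mod_cast hdp
          rw [← mul_sub, abs_mul, abs_mul, abs_pow, Nat.abs_cast, mul_assoc]
          calc |(μ d : ℝ)| * ((d : ℝ) ^ 2 * |∑ m ∈ Icc 1 (n / d), (m : ℝ) ^ 3 - ((n / d : ℕ) : ℝ) ^ 4 / 4|)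
              ≤ 1 * ((d : ℝ) ^ 2 * (((n : ℝ) / d) ^ 3)) := by
                refine mul_le_mul (abs_moebius_real d) ?_ (by positivity) (by norm_num)
                refine mul_le_mul_of_nonneg_left ((cube_sum_err (n / d)).trans ?_) (by positivity)
                exact pow_le_pow_left₀ (Nat.cast_nonneg _) (floor_div_le n d hdn) 3
            _ = (n : ℝ) ^ 3 * ((d : ℝ))⁻¹ := by field_simp
        _ = (n : ℝ) ^ 3 * ∑ d ∈ Icc 1 n, ((d : ℝ))⁻¹ := by rw [← Finset.mul_sum]
        _ ≤ (n : ℝ) ^ 3 * (1 + Real.log n) := by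
            refine mul_le_mul_of_nonneg_left (harmonic_bound n) (by positivity)
  -- |B - Cs|
  have hBC : |B - Cs| ≤ (n : ℝ) ^ 3 * (1 + Real.log n) := by
    rw [hB, hCs, ← Finset.sum_sub_distrib]
    calc |∑ d ∈ Icc 1 n, ((μ d : ℝ) * (d : ℝ) ^ 2 * (((n / d : ℕ) : ℝ) ^ 4 / 4)
          - (μ d : ℝ) * (d : ℝ) ^ 2 * (((n : ℝ) / d) ^ 4 / 4))|
        ≤ ∑ d ∈ Icc 1 n, (n : ℝ) ^ 3 * ((d : ℝ))⁻¹ := by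
          refine (Finset.abs_sum_le_sum_abs _ _).trans (Finset.sum_le_sum fun d hd => ?_)
          have hdp := hdpos d hd
          have hdn : 0 < d := by exact_mod_cast hdp
          rw [← mul_sub, abs_mul, abs_mul, abs_pow, Nat.abs_cast, mul_assoc]
          calc |(μ d : ℝ)| * ((d : ℝ) ^ 2 * |((n / d : ℕ) : ℝ) ^ 4 / 4 - ((n : ℝ) / d) ^ 4 / 4|)
              ≤ 1 * ((d : ℝ) ^ 2 * (((n : ℝ) / d) ^ 3)) := by
                refine mul_le_mul (abs_moebius_real d) ?_ (by positivity) (by norm_num)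
                exact mul_le_mul_of_nonneg_left (pow4_err n d hdn) (by positivity)
            _ = (n : ℝ) ^ 3 * ((d : ℝ))⁻¹ := by field_simp
        _ = (n : ℝ) ^ 3 * ∑ d ∈ Icc 1 n, ((d : ℝ))⁻¹ := by rw [← Finset.mul_sum]
        _ ≤ (n : ℝ) ^ 3 * (1 + Real.log n) := by
            refine mul_le_mul_of_nonneg_left (harmonic_bound n) (by positivity)
  -- |Cs - D|
  have hCD : |Cs - D| ≤ (n : ℝ) ^ 3 / 4 := by
    have hCs' : Cs = (n : ℝ) ^ 4 / 4 * ∑ d ∈ Icc 1 n, (μ d : ℝ) / (d : ℝ) ^ 2 := by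
      rw [hCs, Finset.mul_sum]
      refine Finset.sum_congr rfl fun d hd => ?_
      have hdp := hdpos d hd
      field_simp
    have hD' : D = (n : ℝ) ^ 4 / 4 * (6 / Real.pi ^ 2) := by
      rw [hD]
      have : Real.pi ≠ 0 := Real.pi_ne_zero
      field_simp
      ring
    rw [hCs', hD', ← mul_sub, abs_mul]
    have h1 : |(n : ℝ) ^ 4 / 4| = (n : ℝ) ^ 4 / 4 := abs_of_nonneg (by positivity)
    rw [h1]
    calc (n : ℝ) ^ 4 / 4 * |∑ d ∈ Icc 1 n, (μ d : ℝ) / (d : ℝ) ^ 2 - 6 / Real.pi ^ 2|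
        ≤ (n : ℝ) ^ 4 / 4 * ((n : ℝ))⁻¹ :=
          mul_le_mul_of_nonneg_left (moebius_partial n (by omega)) (by positivity)
      _ = (n : ℝ) ^ 3 / 4 := by
          field_simp
  -- combine
  have hlog : (0.6931471803 : ℝ) < Real.log n := by
    calc (0.6931471803 : ℝ) < Real.log 2 := Real.log_two_gt_d9
      _ ≤ Real.log n := Real.log_le_log (by norm_num) hnR
  have hn3 : (0 : ℝ) ≤ (n : ℝ) ^ 3 := by positivity
  have htotal : |(∑ j ∈ Icc 1 n, (j : ℝ) ^ 2 * (Nat.totient j : ℝ)) - D|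
      ≤ 2 * ((n : ℝ) ^ 3 * (1 + Real.log n)) + (n : ℝ) ^ 3 / 4 := by
    have := abs_sub_le (∑ j ∈ Icc 1 n, (j : ℝ) ^ 2 * (Nat.totient j : ℝ)) B D
    have h2 := abs_sub_le B Cs D
    linarith [hTB, hBC, hCD]
  refine htotal.trans ?_
  nlinarith [mul_le_mul_of_nonneg_left hlog.le hn3]
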